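/- Every bounded graph matroid family M has the Lovász-Yemini property; specifically, every (2·r(M) − 1)-connected graph is M-rigid. -/

import Mathlib

/-!
Common framework: graph matroid families.

A finite simple graph (without isolated vertices) is identified with its edge
set: a finite set of non-diagonal elements of `Sym2 ℕ`.  A graph matroid
family is encoded, following the paper, as a finitary matroid on the edge set
of the countable complete graph on `ℕ` that is invariant under all
permutations of `ℕ`.
-/

/-- The set of vertices covered by a set of edges. -/
def eSupp (E : Set (Sym2 ℕ)) : Set ℕ := {v : ℕ | ∃ e ∈ E, v ∈ e}

/-- The edge set of the complete graph on the vertex set `V`. -/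
def clique (V : Set ℕ) : Set (Sym2 ℕ) := {e : Sym2 ℕ | ¬ e.IsDiag ∧ ∀ v ∈ e, v ∈ V}

/-- The edge set of the complete graph `K_n` on the vertices `0, …, n-1`. -/
def cliqueN (n : ℕ) : Set (Sym2 ℕ) := clique {v : ℕ | v < n}

/-- `E` is (the edge set of) a finite simple graph. -/
def IsGraph (E : Set (Sym2 ℕ)) : Prop := E.Finite ∧ ∀ e ∈ E, ¬ e.IsDiag

/-- The degree of the vertex `v` in the edge set `E`. -/
noncomputable def deg (E : Set (Sym2 ℕ)) (v : ℕ) : ℕ := {e ∈ E | v ∈ e}.ncard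

/-- The minimum degree of (the graph with) edge set `E` (whose vertex set is `eSupp E`). -/
noncomputable def minDeg (E : Set (Sym2 ℕ)) : ℕ := sInf {k : ℕ | ∃ v ∈ eSupp E, deg E v = k}

/-- Deleting a set `S` of vertices from the graph with edge set `E`. -/
def deleteVerts (E : Set (Sym2 ℕ)) (S : Set ℕ) : Set (Sym2 ℕ) := {e ∈ E | ∀ v ∈ e, v ∉ S}

/-- The graph with edge set `E` is `k`-connected: it has more than `k` vertices and
deleting any set of fewer than `k` vertices leaves a connected graph. -/
def KConnected (k : ℕ) (E : Set (Sym2 ℕ)) : Prop :=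
  k < (eSupp E).ncard ∧
  ∀ S : Finset ℕ, S.card < k →
    ((SimpleGraph.fromEdgeSet E).induce (eSupp E \ ↑S)).Connected

/-- `E` is a forest. -/
def IsForest (E : Set (Sym2 ℕ)) : Prop := (SimpleGraph.fromEdgeSet E).IsAcyclic

/-- `E` is a matching: no two distinct edges of `E` share a vertex. -/
def IsMatching (E : Set (Sym2 ℕ)) : Prop :=
  ∀ e ∈ E, ∀ f ∈ E, e ≠ f → ∀ v : ℕ, v ∈ e → v ∉ f

/-- `E` is a star `K_{1,m}` with `m` edges. -/
def IsStar (m : ℕ) (E : Set (Sym2 ℕ)) : Prop :=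
  ∃ (c : ℕ) (L : Finset ℕ), c ∉ L ∧ L.card = m ∧ E = (fun x => s(c, x)) '' ↑L

/-- `C` is a cycle graph `C_n` for some `n ≥ 3`. -/
def IsCycleGraph (C : Set (Sym2 ℕ)) : Prop :=
  ∃ n : ℕ, 3 ≤ n ∧ ∃ f : ZMod n → ℕ, Function.Injective f ∧
    C = {e : Sym2 ℕ | ∃ i : ZMod n, e = s(f i, f (i + 1))}

/-- The rank of the set `X` in the matroid `M₀`: the supremum of the cardinalities of
independent subsets of `X` (as a natural number; all sets we use are finite). -/
noncomputable def mrk (M₀ : Matroid (Sym2 ℕ)) (X : Set (Sym2 ℕ)) : ℕ :=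
  sSup {n : ℕ | ∃ I ⊆ X, M₀.Indep I ∧ I.ncard = n}

/-- A vertical `k`-separation of the matroid `M₀`. -/
def VerticalSep (M₀ : Matroid (Sym2 ℕ)) (k : ℕ) (E₁ E₂ : Set (Sym2 ℕ)) : Prop :=
  Disjoint E₁ E₂ ∧ E₁ ∪ E₂ = M₀.E ∧
  k ≤ mrk M₀ E₁ ∧ k ≤ mrk M₀ E₂ ∧
  mrk M₀ E₁ + mrk M₀ E₂ + 1 ≤ mrk M₀ M₀.E + k

/-- The matroid `M₀` is vertically `k`-connected. -/
def VerticallyConnected (M₀ : Matroid (Sym2 ℕ)) (k : ℕ) : Prop :=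
  k ≤ mrk M₀ M₀.E ∧
  ∀ k' : ℕ, 0 < k' → k' < k → ∀ E₁ E₂ : Set (Sym2 ℕ), ¬ VerticalSep M₀ k' E₁ E₂

/-- A `d`-dimensional abstract rigidity matroid on the complete graph with vertex set `V`. -/
def IsARM (d : ℕ) (V : Set ℕ) (M₀ : Matroid (Sym2 ℕ)) : Prop :=
  M₀.E = clique V ∧
  (∀ E₁ E₂ : Set (Sym2 ℕ), E₁ ⊆ clique V → E₂ ⊆ clique V →
      (eSupp E₁ ∩ eSupp E₂).ncard < d →
      M₀.closure (E₁ ∪ E₂) = M₀.closure E₁ ∪ M₀.closure E₂) ∧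
  (∀ E₁ E₂ : Set (Sym2 ℕ), E₁ ⊆ clique V → E₂ ⊆ clique V →
      d ≤ (eSupp E₁ ∩ eSupp E₂).ncard →
      M₀.closure E₁ = clique (eSupp E₁) → M₀.closure E₂ = clique (eSupp E₂) →
      M₀.closure (E₁ ∪ E₂) = clique (eSupp E₁ ∪ eSupp E₂))

/-- The `d`-dimensional edge split operation: replace an edge `uv` of `G` by a new
vertex `w` joined to `u` and `v`, as well as to `d - 1` other vertices of `G`. -/
def EdgeSplit (d : ℕ) (G G' : Set (Sym2 ℕ)) : Prop :=
  ∃ (u v w : ℕ) (X : Finset ℕ),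
    s(u, v) ∈ G ∧ w ∉ eSupp G ∧ ↑X ⊆ eSupp G ∧ X.card = d - 1 ∧ u ∉ X ∧ v ∉ X ∧
    G' = (G \ {s(u, v)}) ∪ {s(w, u), s(w, v)} ∪ ((fun x => s(w, x)) '' ↑X)

/-- A graph matroid family: a finitary matroid on the edge set of the countable
complete graph on `ℕ`, invariant under all permutations of `ℕ`. -/
structure GraphMatroidFamily where
  /-- The underlying matroid on the edge set of `K_ℕ`. -/
  M : Matroid (Sym2 ℕ)
  ground_eq : M.E = {e : Sym2 ℕ | ¬ e.IsDiag}
  finitary : M.Finitary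
  invariant : ∀ σ : Equiv.Perm ℕ, ∀ I : Set (Sym2 ℕ),
    M.Indep I → M.Indep (Sym2.map σ '' I)

namespace GraphMatroidFamily

variable (M : GraphMatroidFamily)

/-- The rank function of the family: `M.rk E` is the rank of the matroid `M(G)` for
any graph `G` whose edge set contains `E`. -/
noncomputable def rk (E : Set (Sym2 ℕ)) : ℕ := mrk M.M E

/-- A set of edges (a graph) is `M`-independent. -/
def Indep (E : Set (Sym2 ℕ)) : Prop := M.M.Indep E

/-- `C` is an `M`-circuit: a graph that is not `M`-independent, but such that deleting
any single edge from it yields an `M`-independent graph. -/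
def IsCircuit (C : Set (Sym2 ℕ)) : Prop :=
  IsGraph C ∧ ¬ M.Indep C ∧ ∀ e ∈ C, M.Indep (C \ {e})

/-- The graph with edge set `E` is `M`-rigid. -/
def Rigid (E : Set (Sym2 ℕ)) : Prop := M.rk E = M.rk (clique (eSupp E))

/-- The graph with vertex set `V` and edge set `E` is `M`-rigid. -/
def RigidOn (V : Set ℕ) (E : Set (Sym2 ℕ)) : Prop := M.rk E = M.rk (clique V)

/-- `M` is trivial if every (finite, simple) graph is `M`-independent. -/
def Trivial : Prop := ∀ E : Set (Sym2 ℕ), IsGraph E → M.Indep E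

/-- `M` is unbounded: the sequence `r(K_n)` is unbounded. -/
def Unbounded : Prop := ∀ B : ℕ, ∃ n : ℕ, B < M.rk (cliqueN n)

/-- `M` is bounded: the sequence `r(K_n)` is bounded. -/
def Bounded : Prop := ∃ B : ℕ, ∀ n : ℕ, M.rk (cliqueN n) ≤ B

/-- For a bounded family, `m` is the rank `r(M)` of `M`: the maximum (limit) of the
monotone sequence `r(K_n)`. -/
def HasRank (m : ℕ) : Prop :=
  (∀ n : ℕ, M.rk (cliqueN n) ≤ m) ∧ ∃ n : ℕ, M.rk (cliqueN n) = m

/-- `d` is the dimensionality of (the nontrivial family) `M`: the least `d` such that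
there is an `M`-circuit with minimum degree `d + 1`. -/
def IsDimensionality (d : ℕ) : Prop :=
  IsLeast {d : ℕ | ∃ C, M.IsCircuit C ∧ minDeg C = d + 1} d

/-- `t` is the threshold of (the nontrivial family) `M` with dimensionality `d`:
the least value of `|V(C)| - 1` over all `M`-circuits `C` with minimum degree `d + 1`. -/
def IsThreshold (d t : ℕ) : Prop :=
  IsLeast {t : ℕ | ∃ C, M.IsCircuit C ∧ minDeg C = d + 1 ∧ (eSupp C).ncard = t + 1} t

/-- `M` has the Lovász–Yemini property. -/
def LovaszYemini : Prop :=
  ∃ c : ℕ, ∀ E : Set (Sym2 ℕ), IsGraph E → KConnected c E → M.Rigid E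

/-- `ψ` is an isomorphism between the matroids `M(G)` and `M(H)`. -/
def MatroidIso (G H : Set (Sym2 ℕ)) (ψ : Sym2 ℕ → Sym2 ℕ) : Prop :=
  Set.BijOn ψ G H ∧ ∀ S ⊆ G, (M.Indep S ↔ M.Indep (ψ '' S))

/-- `G` is `M`-reconstructible: every isomorphism between `M(G)` and `M(H)` (for a graph
`H` without isolated vertices) is induced by a graph isomorphism. -/
def Reconstructible (G : Set (Sym2 ℕ)) : Prop :=
  ∀ H : Set (Sym2 ℕ), IsGraph H → ∀ ψ : Sym2 ℕ → Sym2 ℕ, M.MatroidIso G H ψ →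
    ∃ φ : ℕ → ℕ, Set.BijOn φ (eSupp G) (eSupp H) ∧ ∀ e ∈ G, ψ e = Sym2.map φ e

/-- `M` has the Whitney property. -/
def Whitney : Prop :=
  ∃ c : ℕ, ∀ E : Set (Sym2 ℕ), IsGraph E → KConnected c E → M.Reconstructible E

/-- `M` is the union of the graph matroid families `Ms`. -/
def IsUnionOf {k : ℕ} (Ms : Fin k → GraphMatroidFamily) : Prop :=
  ∀ I : Set (Sym2 ℕ),
    M.Indep I ↔ ∃ Is : Fin k → Set (Sym2 ℕ), (∀ i, (Ms i).Indep (Is i)) ∧ I = ⋃ i, Is i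

/-- `M` is a family of `d`-dimensional abstract rigidity matroids. -/
def FamilyOfARM (d : ℕ) : Prop :=
  ∀ n : ℕ, d ≤ n → IsARM d {v : ℕ | v < n} (M.M.restrict (cliqueN n))

/-- `M` is `1`-extendable: its dimensionality `d` is finite and positive, and the
`d`-dimensional edge split operation preserves `M`-independence. -/
def OneExtendable : Prop :=
  ∃ d : ℕ, 0 < d ∧ M.IsDimensionality d ∧
    ∀ G G' : Set (Sym2 ℕ), IsGraph G → M.Indep G → EdgeSplit d G G' → M.Indep G'

/-- `G` is `k`-vertex-redundantly `M`-rigid. -/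
def VertexRedundantlyRigid (k : ℕ) (G : Set (Sym2 ℕ)) : Prop :=
  M.Rigid G ∧ ∀ S : Finset ℕ, ↑S ⊆ eSupp G → S.card ≤ k →
    M.RigidOn (eSupp G \ ↑S) (deleteVerts G ↑S)

end GraphMatroidFamily

/-! ### Auxiliary lemmas for the proof of Statement 17 -/

lemma exists_perm_extend (s : Finset ℕ) (f : ℕ → ℕ) :
    Set.InjOn f ↑s → ∃ σ : Equiv.Perm ℕ, ∀ a ∈ s, σ a = f a := by
  classical
  induction s using Finset.induction with
  | empty => exact fun _ => ⟨1, by simp⟩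
  | @insert a s ha ih =>
    intro hf
    obtain ⟨σ₀, hσ₀⟩ := ih (hf.mono (Finset.coe_subset.2 (Finset.subset_insert a s)))
    refine ⟨σ₀.trans (Equiv.swap (σ₀ a) (f a)), ?_⟩
    intro x hx
    rcases Finset.mem_insert.1 hx with rfl | hxs
    · simp [Equiv.trans_apply]
    · have h1 : σ₀ x = f x := hσ₀ x hxs
      have hxa : x ≠ a := by rintro rfl; exact ha hxs
      have h2 : f x ≠ σ₀ a := by
        intro h; exact hxa (σ₀.injective (by rw [h1, h]))
      have h3 : f x ≠ f a := fun h => hxa (hf (by simp [hxs]) (by simp) h)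
      simp [Equiv.trans_apply, h1, Equiv.swap_apply_of_ne_of_ne h2 h3]

lemma sym2_cases (e : Sym2 ℕ) : ∃ a b : ℕ, e = s(a, b) := by
  induction e using Sym2.ind with
  | _ a b => exact ⟨a, b, rfl⟩

lemma sym2_map_fix (σ : ℕ → ℕ) (e : Sym2 ℕ) (h : ∀ v ∈ e, σ v = v) : Sym2.map σ e = e := by
  obtain ⟨a, b, rfl⟩ := sym2_cases e
  rw [Sym2.map_pair_eq, h a (by simp), h b (by simp)]

lemma map_symm_map (σ : Equiv.Perm ℕ) (I : Set (Sym2 ℕ)) :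
    Sym2.map ⇑σ.symm '' (Sym2.map ⇑σ '' I) = I := by
  rw [Set.image_image]
  have key : ∀ e : Sym2 ℕ, Sym2.map ⇑σ.symm (Sym2.map ⇑σ e) = e := by
    intro e
    rw [Sym2.map_map]
    have h : ⇑σ.symm ∘ ⇑σ = id := by ext x; simp
    rw [h, Sym2.map_id, id_eq]
  have h2 : (fun x => Sym2.map ⇑σ.symm (Sym2.map ⇑σ x)) = id := by
    funext e; simp [key]
  rw [h2, Set.image_id]

lemma mem_clique_iff (V : Set ℕ) (a b : ℕ) :
    s(a, b) ∈ clique V ↔ a ≠ b ∧ a ∈ V ∧ b ∈ V := by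
  constructor
  · rintro ⟨h1, h2⟩
    exact ⟨fun h => h1 (by rw [h]; exact Sym2.mk_isDiag_iff.2 rfl),
      h2 a (by simp), h2 b (by simp)⟩
  · rintro ⟨h1, h2, h3⟩
    refine ⟨by simp [Sym2.mk_isDiag_iff, h1], ?_⟩
    intro v hv
    rcases Sym2.mem_iff.1 hv with rfl | rfl <;> assumption

lemma mem_eSupp_of_mem {E : Set (Sym2 ℕ)} {e : Sym2 ℕ} (he : e ∈ E) {v : ℕ} (hv : v ∈ e) :
    v ∈ eSupp E := ⟨e, he, hv⟩

lemma eSupp_finite {E : Set (Sym2 ℕ)} (hE : E.Finite) : (eSupp E).Finite := by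
  have h : eSupp E = ⋃ e ∈ E, {v : ℕ | v ∈ e} := by ext v; simp [eSupp]
  rw [h]
  refine hE.biUnion fun e _ => ?_
  obtain ⟨a, b, rfl⟩ := sym2_cases e
  have h3 : {v : ℕ | v ∈ s(a, b)} = {a, b} := by ext v; simp [Sym2.mem_iff]
  rw [h3]; exact (Set.finite_singleton b).insert a

lemma eSupp_ncard_le {E : Set (Sym2 ℕ)} (hE : E.Finite) : (eSupp E).ncard ≤ 2 * E.ncard := by
  refine Set.Finite.induction_on (motive := fun E _ => (eSupp E).ncard ≤ 2 * E.ncard) E hE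
    (by simp [eSupp]) ?_
  intro e E he hEfin ih
  have hs : eSupp (insert e E) = {v : ℕ | v ∈ e} ∪ eSupp E := by
    ext v; simp [eSupp]
  have h2 : {v : ℕ | v ∈ e}.ncard ≤ 2 := by
    obtain ⟨a, b, rfl⟩ := sym2_cases e
    have h3 : {v : ℕ | v ∈ s(a, b)} = {a, b} := by ext v; simp [Sym2.mem_iff]
    rw [h3]
    exact le_trans (Set.ncard_insert_le a {b}) (by simp)
  calc (eSupp (insert e E)).ncard ≤ {v : ℕ | v ∈ e}.ncard + (eSupp E).ncard := by
        rw [hs]; exact Set.ncard_union_le _ _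
    _ ≤ 2 + 2 * E.ncard := add_le_add h2 ih
    _ ≤ 2 * (insert e E).ncard := by
        rw [Set.ncard_insert_of_notMem he hEfin]; omega

lemma cliqueN_finite (n : ℕ) : (cliqueN n).Finite := by
  refine Set.Finite.subset (((Set.finite_Iio n).prod (Set.finite_Iio n)).image
    (fun p : ℕ × ℕ => s(p.1, p.2))) ?_
  intro e he
  obtain ⟨a, b, rfl⟩ := sym2_cases e
  exact ⟨(a, b), ⟨he.2 a (by simp), he.2 b (by simp)⟩, rfl⟩

namespace GraphMatroidFamily

variable {M : GraphMatroidFamily} {m : ℕ}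

lemma indep_of_map_indep (σ : Equiv.Perm ℕ) {I : Set (Sym2 ℕ)}
    (h : M.M.Indep (Sym2.map ⇑σ '' I)) : M.M.Indep I := by
  have h2 := M.invariant σ.symm _ h
  rwa [map_symm_map] at h2

lemma indep_ncard_le (hm : M.HasRank m) {I : Set (Sym2 ℕ)}
    (hI : M.M.Indep I) (hfin : I.Finite) : I.ncard ≤ m := by
  classical
  have hsupp : (eSupp I).Finite := eSupp_finite hfin
  set sF : Finset ℕ := hsupp.toFinset with hsF
  set K := sF.card with hK
  set g := (sF.orderIsoOfFin rfl).symm with hg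
  set f : ℕ → ℕ := fun a => if h : a ∈ sF then (g ⟨a, h⟩ : ℕ) else 0 with hf
  have hinj : Set.InjOn f ↑sF := by
    intro a ha b hb hab
    have ha' : a ∈ sF := ha
    have hb' : b ∈ sF := hb
    rw [hf] at hab
    simp only [dif_pos ha', dif_pos hb'] at hab
    have h4 : g ⟨a, ha'⟩ = g ⟨b, hb'⟩ := Fin.val_injective hab
    exact congrArg Subtype.val (g.injective h4)
  obtain ⟨σ, hσ⟩ := exists_perm_extend sF f hinj
  have hfK : ∀ a ∈ sF, σ a < K := by
    intro a ha
    rw [hσ a ha, hf]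
    simp only [dif_pos ha]
    exact (g ⟨a, ha⟩).2
  have hJsub : Sym2.map ⇑σ '' I ⊆ cliqueN K := by
    rintro x ⟨e, he, rfl⟩
    obtain ⟨a, b, rfl⟩ := sym2_cases e
    have hnd : ¬ (s(a, b) : Sym2 ℕ).IsDiag := by
      have h := hI.subset_ground he
      rw [M.ground_eq] at h
      exact h
    have hab : a ≠ b := fun h => hnd (Sym2.mk_isDiag_iff.2 h)
    have haS : a ∈ sF := by rw [hsF, Set.Finite.mem_toFinset]; exact ⟨s(a, b), he, by simp⟩
    have hbS : b ∈ sF := by rw [hsF, Set.Finite.mem_toFinset]; exact ⟨s(a, b), he, by simp⟩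
    rw [Sym2.map_pair_eq, cliqueN, mem_clique_iff]
    exact ⟨fun h => hab (σ.injective h), hfK a haS, hfK b hbS⟩
  have hJind : M.M.Indep (Sym2.map ⇑σ '' I) := M.invariant σ _ hI
  have hJcard : (Sym2.map ⇑σ '' I).ncard = I.ncard :=
    Set.ncard_image_of_injective _ (Sym2.map.injective σ.injective)
  have hmem : I.ncard ∈ {n : ℕ | ∃ J ⊆ cliqueN K, M.M.Indep J ∧ J.ncard = n} :=
    ⟨Sym2.map ⇑σ '' I, hJsub, hJind, hJcard⟩
  have hbdd : BddAbove {n : ℕ | ∃ J ⊆ cliqueN K, M.M.Indep J ∧ J.ncard = n} := by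
    refine ⟨(cliqueN K).ncard, ?_⟩
    rintro n ⟨J, hJ, _, rfl⟩
    exact Set.ncard_le_ncard hJ (cliqueN_finite K)
  calc I.ncard ≤ mrk M.M (cliqueN K) := le_csSup hbdd hmem
    _ ≤ m := hm.1 K

lemma bddAbove_mrkSet (hm : M.HasRank m) (X : Set (Sym2 ℕ)) :
    BddAbove {n : ℕ | ∃ I ⊆ X, M.M.Indep I ∧ I.ncard = n} := by
  refine ⟨m, ?_⟩
  rintro n ⟨I, _, hI, rfl⟩
  by_cases hfin : I.Finite
  · exact indep_ncard_le hm hI hfin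
  · rw [Set.Infinite.ncard hfin]; exact Nat.zero_le m

lemma zero_mem_mrkSet (M : GraphMatroidFamily) (X : Set (Sym2 ℕ)) :
    0 ∈ {n : ℕ | ∃ I ⊆ X, M.M.Indep I ∧ I.ncard = n} :=
  ⟨∅, Set.empty_subset X, M.M.empty_indep, by simp⟩

lemma mrk_le_rank (hm : M.HasRank m) (X : Set (Sym2 ℕ)) : mrk M.M X ≤ m := by
  refine csSup_le ⟨0, zero_mem_mrkSet M X⟩ ?_
  rintro n ⟨I, _, hI, rfl⟩
  by_cases hfin : I.Finite
  · exact indep_ncard_le hm hI hfin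
  · rw [Set.Infinite.ncard hfin]; exact Nat.zero_le m

lemma ncard_le_mrk (hm : M.HasRank m) {I X : Set (Sym2 ℕ)} (hIX : I ⊆ X)
    (hI : M.M.Indep I) : I.ncard ≤ mrk M.M X :=
  le_csSup (bddAbove_mrkSet hm X) ⟨I, hIX, hI, rfl⟩

lemma mrk_mono (hm : M.HasRank m) {X Y : Set (Sym2 ℕ)} (hXY : X ⊆ Y) :
    mrk M.M X ≤ mrk M.M Y := by
  refine csSup_le_csSup (bddAbove_mrkSet hm Y) ⟨0, zero_mem_mrkSet M X⟩ ?_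
  rintro n ⟨I, hIX, hI, rfl⟩
  exact ⟨I, hIX.trans hXY, hI, rfl⟩

lemma exists_mrk_basis (hm : M.HasRank m) (X : Set (Sym2 ℕ)) :
    ∃ I ⊆ X, M.M.Indep I ∧ I.ncard = mrk M.M X ∧ I.Finite := by
  have hmem := Nat.sSup_mem ⟨0, zero_mem_mrkSet M X⟩ (bddAbove_mrkSet hm X)
  obtain ⟨I, hIX, hI, hIc⟩ := hmem
  by_cases hfin : I.Finite
  · exact ⟨I, hIX, hI, hIc, hfin⟩
  · refine ⟨∅, Set.empty_subset X, M.M.empty_indep, ?_, Set.finite_empty⟩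
    rw [Set.Infinite.ncard hfin] at hIc
    rw [Set.ncard_empty]
    exact hIc

lemma rk_cliqueN_stab (hm : M.HasRank m) {n : ℕ} (hn : 2 * m ≤ n) :
    mrk M.M (cliqueN n) = m := by
  have hmono : ∀ a b : ℕ, a ≤ b → mrk M.M (cliqueN a) ≤ mrk M.M (cliqueN b) := by
    intro a b hab
    refine mrk_mono hm ?_
    rintro e ⟨hd, hv⟩
    exact ⟨hd, fun v hv' => lt_of_lt_of_le (hv v hv') hab⟩
  have hstep : ∀ k : ℕ, 2 * m ≤ k → mrk M.M (cliqueN (k + 1)) ≤ mrk M.M (cliqueN k) := by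
    intro k hk
    by_contra hlt
    push_neg at hlt
    obtain ⟨I, hIsub, hIind, hIcard, hIfin⟩ := exists_mrk_basis hm (cliqueN (k + 1))
    have hcov : Set.Iio (k + 1) ⊆ eSupp I := by
      by_contra hc
      obtain ⟨v, hvlt, hv⟩ := Set.not_subset.1 hc
      have hvlt' : v < k + 1 := hvlt
      set σ := Equiv.swap v k with hσ
      have hkey : ∀ x : ℕ, x ∈ eSupp I → σ x < k := by
        intro x hx
        have hx1 : x < k + 1 := by
          obtain ⟨e, he, hxe⟩ := hx
          exact (hIsub he).2 x hxe
        have hxv : x ≠ v := fun h => hv (h ▸ hx)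
        by_cases hxk : x = k
        · have hvk : v ≠ k := by rw [← hxk]; exact fun h => hxv h.symm
          rw [hσ, hxk, Equiv.swap_apply_right]
          omega
        · rw [hσ, Equiv.swap_apply_of_ne_of_ne hxv hxk]
          omega
      have hmapped : Sym2.map ⇑σ '' I ⊆ cliqueN k := by
        rintro x ⟨e, he, rfl⟩
        obtain ⟨a, b, rfl⟩ := sym2_cases e
        have hcl := hIsub he
        rw [cliqueN, mem_clique_iff] at hcl
        rw [Sym2.map_pair_eq, cliqueN, mem_clique_iff]
        exact ⟨fun h => hcl.1 (σ.injective h),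
          hkey a ⟨s(a, b), he, by simp⟩, hkey b ⟨s(a, b), he, by simp⟩⟩
      have h1 : (Sym2.map ⇑σ '' I).ncard ≤ mrk M.M (cliqueN k) :=
        ncard_le_mrk hm hmapped (M.invariant σ _ hIind)
      rw [Set.ncard_image_of_injective _ (Sym2.map.injective σ.injective), hIcard] at h1
      omega
    have hc1 : k + 1 ≤ (eSupp I).ncard := by
      have h := Set.ncard_le_ncard hcov (eSupp_finite hIfin)
      rwa [← Finset.coe_range, Set.ncard_coe_finset, Finset.card_range] at h
    have hc2 : (eSupp I).ncard ≤ 2 * I.ncard := eSupp_ncard_le hIfin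
    have hc3 : I.ncard ≤ m := indep_ncard_le hm hIind hIfin
    omega
  obtain ⟨n1, hn1⟩ := hm.2
  have hconst : ∀ j : ℕ, mrk M.M (cliqueN (n + j)) = mrk M.M (cliqueN n) := by
    intro j
    induction j with
    | zero => rfl
    | succ j ih =>
      have h1 := hstep (n + j) (by omega)
      have h2 := hmono (n + j) (n + j + 1) (by omega)
      rw [show n + (j + 1) = n + j + 1 from rfl]
      omega
  have hbig : mrk M.M (cliqueN (max n1 n)) = m := by
    refine le_antisymm (mrk_le_rank hm _) ?_
    have := hmono n1 (max n1 n) (le_max_left _ _)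
    have hn1' : mrk M.M (cliqueN n1) = m := hn1
    omega
  have := hconst (max n1 n - n)
  rw [show n + (max n1 n - n) = max n1 n by omega] at this
  omega

end GraphMatroidFamily

/-- Every bounded graph matroid family `M` has the Lovász–Yemini
property; specifically, every `(2 r(M) - 1)`-connected graph is `M`-rigid. -/
theorem bounded_lovaszYemini (M : GraphMatroidFamily) (m : ℕ)
    (hb : M.Bounded) (hm : M.HasRank m) :
    M.LovaszYemini ∧
    ∀ G : Set (Sym2 ℕ), IsGraph G → KConnected (2 * m - 1) G → M.Rigid G := by
  classical
  have main : ∀ G : Set (Sym2 ℕ), IsGraph G → KConnected (2 * m - 1) G → M.Rigid G := by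
    intro G hG hK
    have hGfin : G.Finite := hG.1
    have hsub : G ⊆ clique (eSupp G) := by
      intro e he
      exact ⟨hG.2 e he, fun v hv => ⟨e, he, hv⟩⟩
    show mrk M.M G = mrk M.M (clique (eSupp G))
    rcases Nat.eq_zero_or_pos m with hm0 | hmpos
    · have h1 := GraphMatroidFamily.mrk_le_rank hm G
      have h2 := GraphMatroidFamily.mrk_le_rank hm (clique (eSupp G))
      omega
    have hVfin : (eSupp G).Finite := eSupp_finite hGfin
    have hVcard : 2 * m ≤ (eSupp G).ncard := by
      have := hK.1; omega
    have hkey : m ≤ mrk M.M G := by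
      by_contra hlt
      push_neg at hlt
      obtain ⟨B, hBG, hBind, hBcard, hBfin⟩ := GraphMatroidFamily.exists_mrk_basis hm G
      have hBsupp : (eSupp B).Finite := eSupp_finite hBfin
      have hBsc : (eSupp B).ncard ≤ 2 * m - 2 := by
        have h := eSupp_ncard_le hBfin; omega
      set Sfin : Finset ℕ := hBsupp.toFinset with hSfin
      have hScard : Sfin.card = (eSupp B).ncard := by
        rw [hSfin, Set.ncard_eq_toFinset_card (eSupp B) hBsupp]
      have hcoe : (↑Sfin : Set ℕ) = eSupp B := Set.Finite.coe_toFinset hBsupp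
      have hconn := hK.2 Sfin (by omega)
      have hdiff : 2 ≤ (eSupp G \ ↑Sfin).ncard := by
        have h1 := Set.ncard_diff_add_ncard (eSupp G) (↑Sfin : Set ℕ) hVfin Sfin.finite_toSet
        have h2 : (eSupp G).ncard ≤ ((eSupp G) ∪ ↑Sfin).ncard :=
          Set.ncard_le_ncard Set.subset_union_left (hVfin.union Sfin.finite_toSet)
        rw [Set.ncard_coe_finset] at h1
        omega
      have hdfin : (eSupp G \ (↑Sfin : Set ℕ)).Finite := hVfin.sdiff
      obtain ⟨w, y, hw, hy, hwy⟩ := (Set.one_lt_ncard_iff hdfin).1 (by omega)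
      obtain ⟨p⟩ := hconn.preconnected ⟨w, hw⟩ ⟨y, hy⟩
      have hnil : ¬ p.Nil := SimpleGraph.Walk.not_nil_of_ne (by
        intro h; exact hwy (congrArg Subtype.val h))
      have hadj := SimpleGraph.Walk.adj_snd hnil
      set a' : ↥(eSupp G \ ↑Sfin) := p.getVert 1 with ha'
      have hadj2 : (SimpleGraph.fromEdgeSet G).Adj w ↑a' := hadj
      rw [SimpleGraph.fromEdgeSet_adj] at hadj2
      obtain ⟨he0, hwu⟩ := hadj2
      set u : ℕ := ↑a' with hu
      have huG : u ∈ eSupp G \ ↑Sfin := a'.2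
      have hwB : w ∉ eSupp B := by rw [← hcoe]; exact hw.2
      have huB : u ∉ eSupp B := by rw [← hcoe]; exact huG.2
      have he0B : s(w, u) ∉ B := fun h => hwB ⟨s(w, u), h, by simp⟩
      have hdep : ¬ M.M.Indep (insert (s(w, u)) B) := by
        intro hind
        have h1 : (insert (s(w, u)) B).ncard ≤ mrk M.M G :=
          GraphMatroidFamily.ncard_le_mrk hm (Set.insert_subset he0 hBG) hind
        rw [Set.ncard_insert_of_notMem he0B hBfin] at h1
        omega
      have hcompl : ((eSupp B ∪ {w, u})ᶜ : Set ℕ).Infinite :=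
        Set.Finite.infinite_compl (hBsupp.union ((Set.finite_singleton u).insert w))
      obtain ⟨Z, hZsub, hZcard⟩ := hcompl.exists_subset_card_eq (2 * m)
      obtain ⟨I0, hI0sub, hI0ind, hI0card, hI0fin⟩ :=
        GraphMatroidFamily.exists_mrk_basis hm (cliqueN (2 * m))
      have hI0m : I0.ncard = m := by
        rw [hI0card, GraphMatroidFamily.rk_cliqueN_stab hm (le_refl (2 * m))]
      set f : ℕ → ℕ := fun j => if h : j < 2 * m then Z.orderEmbOfFin hZcard ⟨j, h⟩ else 0
        with hf
      have hfinj : Set.InjOn f ↑(Finset.range (2 * m)) := by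
        intro a ha b hb hab
        have ha' : a < 2 * m := by simpa using ha
        have hb' : b < 2 * m := by simpa using hb
        rw [hf] at hab
        simp only [dif_pos ha', dif_pos hb'] at hab
        have h := (Z.orderEmbOfFin hZcard).injective hab
        exact congrArg Fin.val h
      obtain ⟨τ, hτ⟩ := exists_perm_extend (Finset.range (2 * m)) f hfinj
      have hτmem : ∀ x : ℕ, x < 2 * m → τ x ∈ Z := by
        intro x hx
        rw [hτ x (Finset.mem_range.2 hx), hf]
        simp only [dif_pos hx]
        exact Finset.orderEmbOfFin_mem Z hZcard ⟨x, hx⟩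
      set J := Sym2.map ⇑τ '' I0 with hJ
      have hJind : M.M.Indep J := M.invariant τ _ hI0ind
      have hJfin : J.Finite := hI0fin.image _
      have hJcard : J.ncard = m := by
        rw [hJ, Set.ncard_image_of_injective _ (Sym2.map.injective τ.injective), hI0m]
      have hJsub : J ⊆ clique ↑Z := by
        rintro x ⟨e, he, rfl⟩
        obtain ⟨a, b, rfl⟩ := sym2_cases e
        have hcl := hI0sub he
        rw [cliqueN, mem_clique_iff] at hcl
        rw [Sym2.map_pair_eq, mem_clique_iff]
        exact ⟨fun h => hcl.1 (τ.injective h), hτmem a hcl.2.1, hτmem b hcl.2.2⟩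
      have hlt2 : B.encard < J.encard := by
        have e1 : B.encard = (B.ncard : ℕ∞) := by
          rw [Set.Finite.encard_eq_coe_toFinset_card hBfin,
            Set.ncard_eq_toFinset_card B hBfin]
        have e2 : J.encard = (J.ncard : ℕ∞) := by
          rw [Set.Finite.encard_eq_coe_toFinset_card hJfin,
            Set.ncard_eq_toFinset_card J hJfin]
        rw [e1, e2]
        exact_mod_cast (show B.ncard < J.ncard by omega)
      obtain ⟨x, hxJB, hxind⟩ := hBind.augment hJind hlt2
      obtain ⟨a, b, hab_eq⟩ := sym2_cases x
      subst hab_eq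
      have hxcl := hJsub hxJB.1
      rw [mem_clique_iff] at hxcl
      obtain ⟨hab, haZ, hbZ⟩ := hxcl
      have haZ' : a ∈ ((eSupp B ∪ {w, u})ᶜ : Set ℕ) := hZsub haZ
      have hbZ' : b ∈ ((eSupp B ∪ {w, u})ᶜ : Set ℕ) := hZsub hbZ
      simp only [Set.mem_compl_iff, Set.mem_union, Set.mem_insert_iff,
        Set.mem_singleton_iff, not_or] at haZ' hbZ'
      set σ := (Equiv.swap u b).trans (Equiv.swap w a) with hσdef
      have hσw : σ w = a := by
        have h1 : Equiv.swap u b w = w :=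
          Equiv.swap_apply_of_ne_of_ne (fun h => hwu h) (fun h => hbZ'.2.1 h.symm)
        rw [hσdef, Equiv.trans_apply, h1, Equiv.swap_apply_left]
      have hσu : σ u = b := by
        have h1 : Equiv.swap u b u = b := Equiv.swap_apply_left u b
        have h2 : Equiv.swap w a b = b :=
          Equiv.swap_apply_of_ne_of_ne (fun h => hbZ'.2.1 h) (fun h => hab h.symm)
        rw [hσdef, Equiv.trans_apply, h1, h2]
      have hσfix : ∀ v ∈ eSupp B, σ v = v := by
        intro v hv
        have h1 : v ≠ u := fun h => huB (h ▸ hv)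
        have h2 : v ≠ b := fun h => hbZ'.1 (h ▸ hv)
        have h3 : v ≠ w := fun h => hwB (h ▸ hv)
        have h4 : v ≠ a := fun h => haZ'.1 (h ▸ hv)
        rw [hσdef, Equiv.trans_apply, Equiv.swap_apply_of_ne_of_ne h1 h2,
          Equiv.swap_apply_of_ne_of_ne h3 h4]
      have himgB : Sym2.map ⇑σ '' B = B := by
        have h1 : ∀ e ∈ B, Sym2.map ⇑σ e = e := by
          intro e he
          exact sym2_map_fix _ e (fun v hv => hσfix v ⟨e, he, hv⟩)
        calc Sym2.map ⇑σ '' B = id '' B := Set.image_congr (by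
              intro e he; rw [h1 e he]; rfl)
          _ = B := Set.image_id B
      have himg : Sym2.map ⇑σ '' (insert (s(w, u)) B) = insert (s(a, b)) B := by
        rw [Set.image_insert_eq, himgB, Sym2.map_pair_eq, hσw, hσu]
      refine hdep ?_
      refine GraphMatroidFamily.indep_of_map_indep σ ?_
      rw [himg]
      exact hxind
    have h1 : mrk M.M G ≤ mrk M.M (clique (eSupp G)) := GraphMatroidFamily.mrk_mono hm hsub
    have h2 : mrk M.M (clique (eSupp G)) ≤ m := GraphMatroidFamily.mrk_le_rank hm _
    omega
  exact ⟨⟨2 * m - 1, main⟩, main⟩
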